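/- Let p be a prime, n a positive integer, and k an integer with 0 ≤ k ≤ n−1. The polynomial x^k·(1 − x^{φ(p^n)}) in Z_{p^n}[x], where φ(p^n) = p^n − p^{n−1}, represents the function u_k : Z_{p^n} → Z_{p^n}; that is, for every x in Z_{p^n}, the evaluation of x^k·(1 − x^{φ(p^n)}) at x equals x^k if p divides x and equals 0 if p does not divide x. -/

import Mathlib

open scoped Classical in
theorem poly_for_uk (p n k : ℕ) (hp : p.Prime) (hn : 0 < n) (hk : k ≤ n - 1) :
    ∀ x : ZMod (p ^ n),
      (Polynomial.X ^ k * (1 - Polynomial.X ^ (p ^ n - p ^ (n - 1))) :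
          Polynomial (ZMod (p ^ n))).eval x =
        if x ∈ Ideal.span {(p : ZMod (p ^ n))} then x ^ k else 0 := by
  haveI : NeZero (p ^ n) := NeZero.of_pos (pow_pos hp.pos n)
  intro x
  have hphi : Nat.totient (p ^ n) = p ^ n - p ^ (n - 1) := by
    rw [Nat.totient_prime_pow hp hn, Nat.mul_sub_one]
    rw [← pow_succ, Nat.sub_add_cancel hn]
  have hple : 2 ≤ p := hp.two_le
  simp only [Polynomial.eval_mul, Polynomial.eval_pow, Polynomial.eval_sub,
    Polynomial.eval_one, Polynomial.eval_X]
  by_cases h : x ∈ Ideal.span {(p : ZMod (p ^ n))}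
  · rw [if_pos h]
    obtain ⟨c, hc⟩ := Ideal.mem_span_singleton.mp h
    have hn1 : n ≤ k + (p ^ n - p ^ (n - 1)) := by
      have h0 : n - 1 < 2 ^ (n - 1) := Nat.lt_two_pow_self
      have h1 : 2 ^ (n - 1) ≤ p ^ (n - 1) := Nat.pow_le_pow_left hple _
      have h2 : p ^ (n - 1) * 2 ≤ p ^ (n - 1) * p := Nat.mul_le_mul_left _ hple
      have h3 : p ^ (n - 1) * p = p ^ n := by rw [← pow_succ, Nat.sub_add_cancel hn]
      omega
    have hpz : ((p : ZMod (p ^ n))) ^ (k + (p ^ n - p ^ (n - 1))) = 0 := by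
      have hz : ((p : ZMod (p ^ n))) ^ n = 0 := by
        rw [← Nat.cast_pow, ZMod.natCast_self]
      calc ((p : ZMod (p ^ n))) ^ (k + (p ^ n - p ^ (n - 1)))
          = (p : ZMod (p ^ n)) ^ n * (p : ZMod (p ^ n)) ^ (k + (p ^ n - p ^ (n - 1)) - n) := by
            rw [← pow_add]; congr 1; omega
        _ = 0 := by rw [hz, zero_mul]
    have hxz : x ^ k * x ^ (p ^ n - p ^ (n - 1)) = 0 := by
      rw [← pow_add, hc, mul_pow, hpz, zero_mul]
    rw [mul_sub, mul_one, hxz, sub_zero]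
  · rw [if_neg h]
    have hdvd : ¬ p ∣ x.val := by
      intro hd
      apply h
      rw [Ideal.mem_span_singleton]
      obtain ⟨c, hc⟩ := hd
      exact ⟨(c : ZMod (p ^ n)), by rw [← Nat.cast_mul, ← hc, ZMod.natCast_val, ZMod.cast_id]⟩
    have hu : IsUnit x := by
      have hco : Nat.Coprime x.val (p ^ n) :=
        Nat.Coprime.pow_right _ ((Nat.Prime.coprime_iff_not_dvd hp).mpr hdvd).symm
      have hx : (((ZMod.unitOfCoprime x.val hco) : (ZMod (p ^ n))ˣ) : ZMod (p ^ n)) = x := by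
        rw [ZMod.coe_unitOfCoprime, ZMod.natCast_val, ZMod.cast_id]
      exact hx ▸ (ZMod.unitOfCoprime x.val hco).isUnit
    obtain ⟨u, hu'⟩ := hu
    have : x ^ (p ^ n - p ^ (n - 1)) = 1 := by
      rw [← hphi, ← hu', ← Units.val_pow_eq_pow_val, ZMod.pow_totient, Units.val_one]
    rw [this, sub_self, mul_zero]
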